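/- Let Ω be a locally compact Hausdorff space, Γ a nondegenerate Banach module over C₀(Ω) and N a U₀(Ω)-valued norm on Γ. Then for every s ∈ Γ the support of s equals the closure of the set where N(s) does not vanish: supp(s) = closure({x ∈ Ω : N(s)(x) ≠ 0}). -/
import Mathlib


open scoped ZeroAtInfty

noncomputable section

variable {𝕜 : Type*} [RCLike 𝕜] {Ω : Type*} [TopologicalSpace Ω]

/-- A Banach module structure over `C₀(Ω, 𝕜)` on a `𝕜`-Banach space `Γ`. -/
structure C0Module (𝕜 : Type*) [RCLike 𝕜] (Ω : Type*) [TopologicalSpace Ω]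
    (Γ : Type*) [NormedAddCommGroup Γ] [NormedSpace 𝕜 Γ] where
  smul : C₀(Ω, 𝕜) →L[𝕜] Γ →L[𝕜] Γ
  mul_smul : ∀ (f g : C₀(Ω, 𝕜)) (s : Γ), smul (f * g) s = smul f (smul g s)
  norm_smul_le : ∀ (f : C₀(Ω, 𝕜)) (s : Γ), ‖smul f s‖ ≤ ‖f‖ * ‖s‖

variable {Γ : Type*} [NormedAddCommGroup Γ] [NormedSpace 𝕜 Γ]

/-- Nondegeneracy of a Banach module over `C₀(Ω, 𝕜)`. -/
def C0Module.Nondegenerate (M : C0Module 𝕜 Ω Γ) : Prop :=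
  Dense (Submodule.span 𝕜 {x : Γ | ∃ (f : C₀(Ω, 𝕜)) (s : Γ), M.smul f s = x} : Set Γ)

/-- The inclusion `C₀(Ω, ℝ) ⊆ C₀(Ω, 𝕜)`. -/
def ofRealC0 (𝕜 : Type*) [RCLike 𝕜] {Ω : Type*} [TopologicalSpace Ω] (f : C₀(Ω, ℝ)) :
    C₀(Ω, 𝕜) where
  toFun := fun x => (f x : 𝕜)
  continuous_toFun := RCLike.continuous_ofReal.comp f.continuous
  zero_at_infty' := by
    have h2 : Filter.Tendsto (fun r : ℝ => (r : 𝕜)) (nhds 0) (nhds 0) := by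
      simpa using (RCLike.continuous_ofReal (K := 𝕜)).tendsto 0
    exact h2.comp f.zero_at_infty'

/-- The pointwise maximum of two functions in `C₀(Ω, ℝ)`. -/
def supC0 (f g : C₀(Ω, ℝ)) : C₀(Ω, ℝ) where
  toFun := fun x => max (f x) (g x)
  continuous_toFun := f.continuous.max g.continuous
  zero_at_infty' := by simpa using f.zero_at_infty'.max g.zero_at_infty'

/-- The AM-identity: `‖(f₁ ⊔ f₂) • s‖ = max ‖f₁ • s‖ ‖f₂ • s‖` for nonnegative real-valued
`f₁, f₂ ∈ C₀(Ω, ℝ)`. -/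
def C0Module.IsAM (M : C0Module 𝕜 Ω Γ) : Prop :=
  ∀ (f₁ f₂ : C₀(Ω, ℝ)), (∀ x, 0 ≤ f₁ x) → (∀ x, 0 ≤ f₂ x) → ∀ s : Γ,
    ‖M.smul (ofRealC0 𝕜 (supC0 f₁ f₂)) s‖ =
      max ‖M.smul (ofRealC0 𝕜 f₁) s‖ ‖M.smul (ofRealC0 𝕜 f₂) s‖

/-- A `U₀(Ω)`-valued norm on a Banach module `Γ` over `C₀(Ω, 𝕜)`. -/
structure IsU0Norm (M : C0Module 𝕜 Ω Γ) (N : Γ → Ω → ℝ) : Prop where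
  nonneg : ∀ (s : Γ) (x : Ω), 0 ≤ N s x
  upperSemicontinuous : ∀ s : Γ, UpperSemicontinuous (N s)
  zero_at_infty : ∀ s : Γ, ∀ ε > 0, ∃ K : Set Ω, IsCompact K ∧ ∀ x ∉ K, N s x ≤ ε
  sup_eq_norm : ∀ s : Γ, (⨆ x : Ω, N s x) = ‖s‖
  smul_eq : ∀ (f : C₀(Ω, 𝕜)) (s : Γ) (x : Ω), N (M.smul f s) x = ‖f x‖ * N s x
  subadd : ∀ (s₁ s₂ : Γ) (x : Ω), N (s₁ + s₂) x ≤ N s₁ x + N s₂ x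

/-- The canonical candidate for the `U₀(Ω)`-valued norm. -/
def normFormula (M : C0Module 𝕜 Ω Γ) (s : Γ) (x : Ω) : ℝ :=
  sInf {r : ℝ | ∃ f : C₀(Ω, ℝ), (∀ y, 0 ≤ f y) ∧ f x = 1 ∧ r = ‖M.smul (ofRealC0 𝕜 f) s‖}


/-- The support of `s` in `Ω`. -/
def C0Module.support (M : C0Module 𝕜 Ω Γ) (s : Γ) : Set Ω :=
  {x : Ω | ∀ f : C₀(Ω, 𝕜), f x ≠ 0 → M.smul f s ≠ 0}

lemma zac_coe_mk' {Ω : Type*} [TopologicalSpace Ω] (f : C(Ω, ℝ)) (h) :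
    ((⟨f, h⟩ : C₀(Ω, ℝ)) : Ω → ℝ) = f := rfl

/-- For a `U₀(Ω)`-normed module, the support of `s` equals the closure of
the set where the vector-valued norm of `s` does not vanish. -/
theorem support_eq_closure_u0Norm_ne_zero
    [LocallyCompactSpace Ω] [T2Space Ω] [CompleteSpace Γ]
    (M : C0Module 𝕜 Ω Γ) (hM : M.Nondegenerate)
    (N : Γ → Ω → ℝ) (hN : IsU0Norm M N) (s : Γ) :
    M.support s = closure {x : Ω | N s x ≠ 0} := by
  have hN0 : ∀ y, N (0 : Γ) y = 0 := by
    intro y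
    have h : M.smul (0 : C₀(Ω, 𝕜)) s = 0 := by simp
    have := hN.smul_eq (0 : C₀(Ω, 𝕜)) s y
    rw [h] at this
    simpa using this
  apply le_antisymm
  · -- support ⊆ closure
    intro x hx
    by_contra hc
    rw [mem_closure_iff] at hc
    push_neg at hc
    obtain ⟨U, hUo, hxU, hU⟩ := hc
    have hU' : ∀ y ∈ U, N s y = 0 := by
      intro y hy
      by_contra hy'
      exact Set.eq_empty_iff_forall_notMem.mp hU y ⟨hy, hy'⟩
    obtain ⟨f, hf1, hf0, hfc, _⟩ :=
      exists_continuous_one_zero_of_isCompact (isCompact_singleton (x := x))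
        (isClosed_compl_iff.mpr hUo) (by simpa using hxU)
    set g : C₀(Ω, 𝕜) := ofRealC0 𝕜 ⟨f, hfc.is_zero_at_infty⟩ with hg
    have hgx : g x ≠ 0 := by
      have : f x = 1 := hf1 rfl
      simp [hg, ofRealC0, zac_coe_mk', this]
    have hNg : ∀ y, N (M.smul g s) y = 0 := by
      intro y
      rw [hN.smul_eq]
      by_cases hy : y ∈ U
      · rw [hU' y hy, mul_zero]
      · have : f y = 0 := hf0 hy
        simp [hg, ofRealC0, zac_coe_mk', this]
    have : M.smul g s = 0 := by
      have hn : ‖M.smul g s‖ = 0 := by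
        rw [← hN.sup_eq_norm]
        have : (fun y => N (M.smul g s) y) = fun _ => (0 : ℝ) := funext hNg
        rw [this]
        exact Real.iSup_const_zero
      exact norm_eq_zero.mp hn
    exact hx g hgx this
  · -- closure ⊆ support
    have hsub : {x : Ω | N s x ≠ 0} ⊆ M.support s := by
      intro y hy f hfy hfs
      have := hN.smul_eq f s y
      rw [hfs, hN0] at this
      have := this.symm
      rcases mul_eq_zero.mp this with h | h
      · exact hfy (norm_eq_zero.mp h)
      · exact hy h
    have hclosed : IsClosed (M.support s) := by
      rw [← isOpen_compl_iff, isOpen_iff_mem_nhds]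
      intro x hx
      simp only [C0Module.support, Set.mem_compl_iff, Set.mem_setOf_eq, not_forall,
        not_not] at hx
      obtain ⟨f, hfx, hf0⟩ := hx
      have hV : IsOpen {y : Ω | f y ≠ 0} :=
        isOpen_compl_iff.mpr (isClosed_singleton.preimage f.continuous)
      refine Filter.mem_of_superset (hV.mem_nhds hfx) ?_
      intro y hy
      simp only [C0Module.support, Set.mem_compl_iff, Set.mem_setOf_eq, not_forall, not_not]
      exact ⟨f, hy, hf0⟩
    exact closure_minimal hsub hclosed

end
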